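/- (Mixed current identity) With g, h real C² functions and u a C² solution of u'' + (ω²−V)u = H, define Q^{g,h} = g(|u'|² + (ω²−V)|u|²) + h Re(u'ū) − (1/2)h'|u|². Then (Q^{g,h})' = |u'|²(g'+h) + ω²(g'−h)|u|² + |u|²(−g'V − gV' + Vh − (1/2)h'') + 2g Re(u'H̄) + h Re(uH̄). -/

import Mathlib

private lemma reMulConj {a b : ℝ → ℂ} {a' b' : ℂ} {s : ℝ}
    (ha : HasDerivAt a a' s) (hb : HasDerivAt b b' s) :
    HasDerivAt (fun t => (a t * (starRingEnd ℂ) (b t)).re)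
      ((a' * (starRingEnd ℂ) (b s) + a s * (starRingEnd ℂ) b').re) s := by
  have hm : HasDerivAt (fun t => a t * (starRingEnd ℂ) (b t))
      (a' * (starRingEnd ℂ) (b s) + a s * (starRingEnd ℂ) b') s := ha.mul hb.star
  exact (Complex.reCLM.hasFDerivAt.comp_hasDerivAt s hm)

private lemma normSqDeriv {a : ℝ → ℂ} {a' : ℂ} {s : ℝ} (ha : HasDerivAt a a' s) :
    HasDerivAt (fun t => ‖a t‖^2)
      ((a' * (starRingEnd ℂ) (a s) + a s * (starRingEnd ℂ) a').re) s := by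
  have := reMulConj ha ha
  convert this using 1
  funext t
  rw [Complex.mul_conj]
  simp [Complex.normSq_eq_norm_sq, ← Complex.ofReal_pow, Complex.ofReal_re]

/-- the mixed current identity for
Q^{g,h} = g(|u'|² + (ω²−V)|u|²) + h Re(u'ū) − (1/2)h'|u|²:
(Q^{g,h})' = |u'|²(g'+h) + ω²(g'−h)|u|²
  + |u|²(−g'V − gV' + Vh − (1/2)h'') + 2g Re(u'H̄) + h Re(uH̄). -/
theorem stmt_16 (ω : ℝ) (I : Set ℝ) (hI : IsOpen I)
    (V V' g g' h h' h'' : ℝ → ℝ) (H u u' : ℝ → ℂ)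
    (hV : ∀ s ∈ I, HasDerivAt V (V' s) s)
    (hg : ∀ s ∈ I, HasDerivAt g (g' s) s)
    (hh : ∀ s ∈ I, HasDerivAt h (h' s) s)
    (hh' : ∀ s ∈ I, HasDerivAt h' (h'' s) s)
    (hu : ∀ s ∈ I, HasDerivAt u (u' s) s)
    (hode : ∀ s ∈ I, HasDerivAt u' (-((ω^2 - V s : ℝ) : ℂ) * u s + H s) s) :
    ∀ s ∈ I,
      HasDerivAt (fun t =>
          g t * (‖u' t‖^2 + (ω^2 - V t) * ‖u t‖^2)
            + h t * (u' t * (starRingEnd ℂ) (u t)).re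
            - (1/2) * h' t * ‖u t‖^2)
        (‖u' s‖^2 * (g' s + h s)
          + ω^2 * (g' s - h s) * ‖u s‖^2
          + ‖u s‖^2 * (-(g' s * V s) - g s * V' s + V s * h s - (1/2) * h'' s)
          + 2 * g s * (u' s * (starRingEnd ℂ) (H s)).re
          + h s * (u s * (starRingEnd ℂ) (H s)).re) s := by
  intro s hs
  have hVs := hV s hs
  have hgs := hg s hs
  have hhs := hh s hs
  have hh's := hh' s hs
  have hus := hu s hs
  have hodes := hode s hs
  have hNu := normSqDeriv hus
  have hNu' := normSqDeriv hodes
  have hP := reMulConj hodes hus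
  have hA := hNu'.add (((hasDerivAt_const s (ω^2)).sub hVs).mul hNu)
  have hQ := ((hgs.mul hA).add (hhs.mul hP)).sub
      (((hasDerivAt_const s ((1:ℝ)/2)).mul hh's).mul hNu)
  refine hQ.congr_deriv ?_
  have hre : ∀ z w : ℂ, (z * (starRingEnd ℂ) w).re = z.re * w.re + z.im * w.im := by
    intro z w; simp [Complex.mul_re]
  have hn : ∀ z : ℂ, ‖z‖^2 = z.re^2 + z.im^2 := by
    intro z
    rw [Complex.sq_norm, Complex.normSq_apply]; ring
  simp only [hre, hn, Complex.add_re, Complex.add_im, Complex.mul_re, Complex.mul_im,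
    Complex.neg_re, Complex.neg_im, Complex.ofReal_re, Complex.ofReal_im,
    Complex.conj_re, Complex.conj_im, Complex.sub_re, Complex.sub_im,
    Pi.add_apply, Pi.mul_apply, Pi.sub_apply]
  ring
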